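/- Let H be a real inner product space, let G and B be disjoint finite families of points of H with union D = G ∪ B and |B| < |G|, let ε ≥ 0, and let μ ∈ H be an ε-approximate geometric median of D, i.e. Σ_{x ∈ D} ‖μ − x‖ ≤ inf_{z ∈ H} Σ_{x ∈ D} ‖z − x‖ + ε. Then (|G| − |B|)·‖μ‖ ≤ 2·Σ_{x ∈ G} ‖x‖ + ε. -/
import Mathlib


open Finset

/-- an `ε`-approximate geometric median of an `α`-corrupted set
satisfies `(|G| - |B|) * ‖μ‖ ≤ 2 * Σ_{x ∈ G} ‖x‖ + ε`. -/
theorem gm_norm_bound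
    {H : Type*} [NormedAddCommGroup H] [InnerProductSpace ℝ H]
    {ι : Type*} [DecidableEq ι] (G B : Finset ι) (hGB : Disjoint G B)
    (hcard : B.card < G.card)
    (f : ι → H) (ε : ℝ) (hε : 0 ≤ ε) (μ : H)
    (hμ : ∑ i ∈ G ∪ B, ‖μ - f i‖ ≤ (⨅ z : H, ∑ i ∈ G ∪ B, ‖z - f i‖) + ε) :
    ((G.card : ℝ) - B.card) * ‖μ‖ ≤ 2 * ∑ i ∈ G, ‖f i‖ + ε := by
  have hbdd : BddBelow (Set.range fun z : H => ∑ i ∈ G ∪ B, ‖z - f i‖) := by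
    refine ⟨0, ?_⟩
    rintro x ⟨z, rfl⟩
    exact Finset.sum_nonneg fun i _ => norm_nonneg _
  have hinf : (⨅ z : H, ∑ i ∈ G ∪ B, ‖z - f i‖) ≤ ∑ i ∈ G ∪ B, ‖f i‖ := by
    have := ciInf_le hbdd (0 : H)
    simpa using this
  have key : ∑ i ∈ G ∪ B, ‖μ - f i‖ ≤ ∑ i ∈ G ∪ B, ‖f i‖ + ε := le_trans hμ (by linarith)
  rw [Finset.sum_union hGB, Finset.sum_union hGB] at key
  have hG : (G.card : ℝ) * ‖μ‖ - ∑ i ∈ G, ‖f i‖ ≤ ∑ i ∈ G, ‖μ - f i‖ := by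
    have : ∑ i ∈ G, (‖μ‖ - ‖f i‖) ≤ ∑ i ∈ G, ‖μ - f i‖ :=
      Finset.sum_le_sum fun i _ => by
        have := norm_sub_norm_le μ (f i); linarith
    simpa [Finset.sum_sub_distrib] using this
  have hB : ∑ i ∈ B, ‖f i‖ - (B.card : ℝ) * ‖μ‖ ≤ ∑ i ∈ B, ‖μ - f i‖ := by
    have : ∑ i ∈ B, (‖f i‖ - ‖μ‖) ≤ ∑ i ∈ B, ‖μ - f i‖ :=
      Finset.sum_le_sum fun i _ => by
        have := norm_sub_norm_le (f i) μ
        rw [norm_sub_rev]; linarith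
    simpa [Finset.sum_sub_distrib] using this
  have hBnn : (0:ℝ) ≤ ∑ i ∈ B, ‖f i‖ := Finset.sum_nonneg fun i _ => norm_nonneg _
  nlinarith
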